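/- For a Fock-space construction F on a category of spaces and linear maps equipped with linear exponential comonad structure (ε, δ), the extension v* := Fv ∘ (F0 ≅ FI iso) ∘ δ_0 ∘ (I ≅ F0) : I → FA of a vector v : I → A is a coherent state: ε̄_A ∘ v* = id_I, and Δ̄_A ∘ v* = (v* ⊗ v*) ∘ λ⁻¹_I. -/

import Mathlib

open CategoryTheory CategoryTheory.Limits CategoryTheory.MonoidalCategory ZeroObject

universe v u

variable (C : Type u) [Category.{v} C] [HasZeroObject C] [HasZeroMorphisms C]
  [HasBinaryBiproducts C] [MonoidalCategory C] [SymmetricCategory C]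

/-- The diagonal `Δ_A = ⟨id, id⟩ : A ⟶ A ⊞ A`. -/
noncomputable abbrev bdiag (A : C) : A ⟶ A ⊞ A := biprod.lift (𝟙 A) (𝟙 A)

/-- The codiagonal `∇_A = [id, id] : A ⊞ A ⟶ A`. -/
noncomputable abbrev bcodiag (A : C) : A ⊞ A ⟶ A := biprod.desc (𝟙 A) (𝟙 A)

variable {C}

/-- Convolution addition of morphisms induced by the biproduct structure:
`f + g = ∇_B ∘ (f ⊞ g) ∘ Δ_A`. -/
noncomputable def cadd {A B : C} (f g : A ⟶ B) : A ⟶ B :=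
  bdiag C A ≫ biprod.map f g ≫ bcodiag C B

variable (C)

/-- Compatibility of the biproduct structure and the symmetric monoidal
structure: the tensor product is bilinear for the biproduct (convolution)
enrichment.  A category carrying both compatible structures is a category of
spaces and linear maps. -/
class TensorCompatible : Prop where
  zero_tensorHom : ∀ {A B X Y : C} (f : X ⟶ Y), (0 : A ⟶ B) ⊗ₘ f = 0
  tensorHom_zero : ∀ {A B X Y : C} (f : X ⟶ Y), f ⊗ₘ (0 : A ⟶ B) = 0
  cadd_tensorHom : ∀ {A B X Y : C} (f g : A ⟶ B) (h : X ⟶ Y),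
    cadd f g ⊗ₘ h = cadd (f ⊗ₘ h) (g ⊗ₘ h)
  tensorHom_cadd : ∀ {A B X Y : C} (f g : A ⟶ B) (h : X ⟶ Y),
    h ⊗ₘ cadd f g = cadd (h ⊗ₘ f) (h ⊗ₘ g)

/-- A (bosonic) Fock-space construction on a category of spaces and linear
maps: a strong symmetric monoidal functor from the biproduct monoidal
structure `(0, ⊞)` to the symmetric monoidal structure `(𝟙_ C, ⊗)`. -/
structure FockConstruction where
  /-- The underlying functor. -/
  F : C ⥤ C
  /-- The unit comparison isomorphism `I ≅ F 0`. -/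
  φ₀ : 𝟙_ C ≅ F.obj (0 : C)
  /-- The tensor comparison isomorphism `F A ⊗ F B ≅ F (A ⊞ B)`. -/
  φ : ∀ A B : C, F.obj A ⊗ F.obj B ≅ F.obj (A ⊞ B)
  φ_natural : ∀ {A B A' B' : C} (f : A ⟶ A') (g : B ⟶ B'),
    (F.map f ⊗ₘ F.map g) ≫ (φ A' B').hom = (φ A B).hom ≫ F.map (biprod.map f g)
  left_unitality : ∀ A : C,
    (φ₀.hom ⊗ₘ 𝟙 (F.obj A)) ≫ (φ 0 A).hom ≫ F.map (biprod.desc 0 (𝟙 A)) =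
      (λ_ (F.obj A)).hom
  right_unitality : ∀ A : C,
    (𝟙 (F.obj A) ⊗ₘ φ₀.hom) ≫ (φ A 0).hom ≫ F.map (biprod.desc (𝟙 A) 0) =
      (ρ_ (F.obj A)).hom
  associativity : ∀ A B D : C,
    ((φ A B).hom ⊗ₘ 𝟙 (F.obj D)) ≫ (φ (A ⊞ B) D).hom ≫
        F.map (biprod.associator A B D).hom =
      (α_ (F.obj A) (F.obj B) (F.obj D)).hom ≫
        (𝟙 (F.obj A) ⊗ₘ (φ B D).hom) ≫ (φ A (B ⊞ D)).hom
  braided : ∀ A B : C,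
    (φ A B).hom ≫ F.map (biprod.braiding A B).hom =
      (β_ (F.obj A) (F.obj B)).hom ≫ (φ B A).hom

namespace FockConstruction

variable {C} (Φ : FockConstruction C)

/-- The unit `η̄_A : I ⟶ F A` of the Fock bialgebra. -/
noncomputable def unit (A : C) : 𝟙_ C ⟶ Φ.F.obj A :=
  Φ.φ₀.hom ≫ Φ.F.map (0 : (0 : C) ⟶ A)

/-- The multiplication `∇̄_A : F A ⊗ F A ⟶ F A` of the Fock bialgebra. -/
noncomputable def mult (A : C) : Φ.F.obj A ⊗ Φ.F.obj A ⟶ Φ.F.obj A :=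
  (Φ.φ A A).hom ≫ Φ.F.map (bcodiag C A)

/-- The counit `ε̄_A : F A ⟶ I` of the Fock bialgebra. -/
noncomputable def counit (A : C) : Φ.F.obj A ⟶ 𝟙_ C :=
  Φ.F.map (0 : A ⟶ (0 : C)) ≫ Φ.φ₀.inv

/-- The comultiplication `Δ̄_A : F A ⟶ F A ⊗ F A` of the Fock bialgebra. -/
noncomputable def comult (A : C) : Φ.F.obj A ⟶ Φ.F.obj A ⊗ Φ.F.obj A :=
  Φ.F.map (bdiag C A) ≫ (Φ.φ A A).inv

/-- The creation operator `a⁺ = ∇̄_A ∘ (η_A ⊗ id) : A ⊗ F A ⟶ F A` associated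
to a natural transformation `η : Id ⟶ F`. -/
noncomputable def creation (η : 𝟭 C ⟶ Φ.F) (A : C) : A ⊗ Φ.F.obj A ⟶ Φ.F.obj A :=
  (η.app A ⊗ₘ 𝟙 (Φ.F.obj A)) ≫ Φ.mult A

/-- The annihilation operator `a⁻ = (ε_A ⊗ id) ∘ Δ̄_A : F A ⟶ A ⊗ F A`
associated to a natural transformation `ε : F ⟶ Id`. -/
noncomputable def annihilation (ε : Φ.F ⟶ 𝟭 C) (A : C) :
    Φ.F.obj A ⟶ A ⊗ Φ.F.obj A :=
  Φ.comult A ≫ (ε.app A ⊗ₘ 𝟙 (Φ.F.obj A))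

end FockConstruction

/-- A linear Fock-space construction: a Fock-space construction equipped with
linear exponential comonad structure `(ε, δ)`. -/
structure LinearFockConstruction extends FockConstruction C where
  /-- The counit `ε_A : F A ⟶ A` of the comonad. -/
  ε : F ⟶ 𝟭 C
  /-- The comultiplication `δ_A : F A ⟶ F (F A)` of the comonad. -/
  δ : F ⟶ F ⋙ F
  counit_left : ∀ A : C, δ.app A ≫ ε.app (F.obj A) = 𝟙 (F.obj A)
  counit_right : ∀ A : C, δ.app A ≫ F.map (ε.app A) = 𝟙 (F.obj A)
  coassoc : ∀ A : C, δ.app A ≫ δ.app (F.obj A) = δ.app A ≫ F.map (δ.app A)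
  -- coherence of `δ` with the strong monoidal structure
  coherence_zero :
    δ.app (0 : C) ≫ F.map (0 : F.obj (0 : C) ⟶ (0 : C)) = 𝟙 (F.obj (0 : C))
  coherence_biprod : ∀ A B : C,
    (δ.app A ⊗ₘ δ.app B) ≫ (φ (F.obj A) (F.obj B)).hom =
      (φ A B).hom ≫ δ.app (A ⊞ B) ≫
        F.map (biprod.lift (F.map biprod.fst) (F.map biprod.snd))

namespace LinearFockConstruction

variable {C} (Λ : LinearFockConstruction C)

/-- The coherent state extension `v* : I ⟶ F A` of a vector `v : I ⟶ A`:
`I ≅ F 0 → F F 0 ≅ F I → F A`. -/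
noncomputable def ext {A : C} (v : 𝟙_ C ⟶ A) : 𝟙_ C ⟶ Λ.F.obj A :=
  Λ.φ₀.hom ≫ Λ.δ.app (0 : C) ≫ Λ.F.map Λ.φ₀.inv ≫ Λ.F.map v

end LinearFockConstruction

/-- For a linear Fock-space construction, the extension `v*` of any vector
`v : I ⟶ A` is a coherent state: `ε̄_A ∘ v* = id_I` and
`Δ̄_A ∘ v* = (v* ⊗ v*) ∘ λ⁻¹_I`. -/
theorem LinearFockConstruction.ext_coherent {C : Type u} [Category.{v} C]
    [HasZeroObject C] [HasZeroMorphisms C] [HasBinaryBiproducts C]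
    [MonoidalCategory C] [SymmetricCategory C] [TensorCompatible C]
    (Λ : LinearFockConstruction C) {A : C} (v : 𝟙_ C ⟶ A) :
    Λ.ext v ≫ Λ.toFockConstruction.counit A = 𝟙 (𝟙_ C) ∧
    Λ.ext v ≫ Λ.toFockConstruction.comult A =
      (λ_ (𝟙_ C)).inv ≫ (Λ.ext v ⊗ₘ Λ.ext v) := by
  constructor
  · -- counit part
    simp only [LinearFockConstruction.ext, FockConstruction.counit, Category.assoc,
      ← Functor.map_comp_assoc, comp_zero, zero_comp]
    slice_lhs 2 3 => rw [Λ.coherence_zero]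
    simp
  · -- comult part
    have hfst : (biprod.fst : (0 : C) ⊞ 0 ⟶ 0) = biprod.desc 0 (𝟙 (0 : C)) :=
      (isZero_zero C).eq_of_tgt _ _
    have hinlsnd : (biprod.inl ≫ biprod.snd : (0 : C) ⟶ 0) = 𝟙 (0 : C) :=
      (isZero_zero C).eq_of_tgt _ _
    have hfstinl : (biprod.fst ≫ biprod.inl : (0 : C) ⊞ 0 ⟶ (0 : C) ⊞ 0) =
        𝟙 ((0 : C) ⊞ 0) := by
      apply biprod.hom_ext
      · exact (isZero_zero C).eq_of_tgt _ _
      · exact (isZero_zero C).eq_of_tgt _ _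
    have hδ : Λ.δ.app ((0 : C) ⊞ 0) =
        Λ.F.map biprod.fst ≫ Λ.δ.app (0 : C) ≫ Λ.F.map (Λ.F.map biprod.inl) := by
      have hnat := Λ.δ.naturality (biprod.inl : (0 : C) ⟶ (0 : C) ⊞ 0)
      simp only [Functor.comp_map, Functor.id_map] at hnat
      calc Λ.δ.app ((0 : C) ⊞ 0)
          = Λ.F.map (biprod.fst ≫ biprod.inl) ≫ Λ.δ.app ((0 : C) ⊞ 0) := by
            rw [hfstinl]; simp
        _ = Λ.F.map biprod.fst ≫ Λ.F.map biprod.inl ≫ Λ.δ.app ((0 : C) ⊞ 0) := by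
            rw [Functor.map_comp, Category.assoc]
        _ = Λ.F.map biprod.fst ≫ Λ.δ.app (0 : C) ≫ Λ.F.map (Λ.F.map biprod.inl) := by
            rw [hnat]
    have hφfst : (Λ.φ 0 0).hom ≫ Λ.F.map (biprod.fst : (0 : C) ⊞ 0 ⟶ 0) =
        (Λ.φ₀.inv ⊗ₘ 𝟙 (Λ.F.obj 0)) ≫ (λ_ (Λ.F.obj (0 : C))).hom := by
      rw [hfst, ← Λ.left_unitality (0 : C), MonoidalCategory.tensorHom_comp_tensorHom_assoc]
      simp
    set w : Λ.F.obj (0 : C) ⟶ A := Λ.φ₀.inv ≫ v with hw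
    have hext : Λ.ext v = Λ.φ₀.hom ≫ Λ.δ.app (0 : C) ≫ Λ.F.map w := by
      simp [LinearFockConstruction.ext, hw]
    have hmaps : Λ.F.map (Λ.F.map (biprod.inl : (0 : C) ⟶ (0 : C) ⊞ 0)) ≫
        Λ.F.map (biprod.lift (Λ.F.map biprod.fst) (Λ.F.map biprod.snd)) ≫
        Λ.F.map (biprod.map w w) = Λ.F.map (w ≫ bdiag C A) := by
      rw [← Functor.map_comp, ← Functor.map_comp]
      congr 1
      apply biprod.hom_ext
      · simp only [Category.assoc, biprod.map_fst, biprod.lift_fst_assoc,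
          biprod.lift_fst, Category.comp_id]
        rw [← Functor.map_comp_assoc, biprod.inl_fst, CategoryTheory.Functor.map_id,
          Category.id_comp]
      · simp only [Category.assoc, biprod.map_snd, biprod.lift_snd_assoc,
          biprod.lift_snd, Category.comp_id]
        rw [← Functor.map_comp_assoc, hinlsnd, CategoryTheory.Functor.map_id,
          Category.id_comp]
    have key : (λ_ (𝟙_ C)).inv ≫ (Λ.ext v ⊗ₘ Λ.ext v) ≫ (Λ.φ A A).hom =
        Λ.φ₀.hom ≫ Λ.δ.app (0 : C) ≫ Λ.F.map (w ≫ bdiag C A) := by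
      calc (λ_ (𝟙_ C)).inv ≫ (Λ.ext v ⊗ₘ Λ.ext v) ≫ (Λ.φ A A).hom
          = (λ_ (𝟙_ C)).inv ≫ (Λ.φ₀.hom ⊗ₘ Λ.φ₀.hom) ≫
              (Λ.δ.app 0 ⊗ₘ Λ.δ.app 0) ≫ ((Λ.F.map w ⊗ₘ Λ.F.map w) ≫
              (Λ.φ A A).hom) := by
            rw [hext]
            simp only [← MonoidalCategory.tensorHom_comp_tensorHom, Category.assoc]
        _ = (λ_ (𝟙_ C)).inv ≫ (Λ.φ₀.hom ⊗ₘ Λ.φ₀.hom) ≫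
              ((Λ.δ.app 0 ⊗ₘ Λ.δ.app 0) ≫ (Λ.φ (Λ.F.obj 0) (Λ.F.obj 0)).hom) ≫
              Λ.F.map (biprod.map w w) := by
            rw [Λ.φ_natural w w]; simp
        _ = (λ_ (𝟙_ C)).inv ≫ (Λ.φ₀.hom ⊗ₘ Λ.φ₀.hom) ≫ (Λ.φ 0 0).hom ≫
              Λ.δ.app ((0 : C) ⊞ 0) ≫
              Λ.F.map (biprod.lift (Λ.F.map biprod.fst) (Λ.F.map biprod.snd)) ≫
              Λ.F.map (biprod.map w w) := by
            rw [Λ.coherence_biprod]; simp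
        _ = (λ_ (𝟙_ C)).inv ≫ (Λ.φ₀.hom ⊗ₘ Λ.φ₀.hom) ≫
              ((Λ.φ 0 0).hom ≫ Λ.F.map biprod.fst) ≫ Λ.δ.app (0 : C) ≫
              Λ.F.map (w ≫ bdiag C A) := by
            rw [hδ]
            simp only [Category.assoc]
            rw [hmaps]
        _ = ((λ_ (𝟙_ C)).inv ≫ (𝟙 (𝟙_ C) ⊗ₘ Λ.φ₀.hom) ≫
              (λ_ (Λ.F.obj (0 : C))).hom) ≫ Λ.δ.app (0 : C) ≫
              Λ.F.map (w ≫ bdiag C A) := by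
            have htens : (Λ.φ₀.hom ⊗ₘ Λ.φ₀.hom) ≫ (Λ.φ₀.inv ⊗ₘ 𝟙 (Λ.F.obj 0)) =
                (𝟙 (𝟙_ C) ⊗ₘ Λ.φ₀.hom) := by
              rw [MonoidalCategory.tensorHom_comp_tensorHom]; simp
            rw [hφfst]
            simp only [Category.assoc]
            rw [reassoc_of% htens]
        _ = Λ.φ₀.hom ≫ Λ.δ.app (0 : C) ≫ Λ.F.map (w ≫ bdiag C A) := by
            rw [MonoidalCategory.id_tensorHom,
              MonoidalCategory.leftUnitor_naturality]
            simp
    simp only [FockConstruction.comult]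
    calc Λ.ext v ≫ Λ.F.map (bdiag C A) ≫ (Λ.φ A A).inv
        = (Λ.φ₀.hom ≫ Λ.δ.app (0 : C) ≫ Λ.F.map (w ≫ bdiag C A)) ≫
            (Λ.φ A A).inv := by
          simp [LinearFockConstruction.ext, hw]
      _ = (λ_ (𝟙_ C)).inv ≫ (Λ.ext v ⊗ₘ Λ.ext v) := by
          rw [← key]; simp
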